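/- Let A be a commutative unital complex ⋆-algebra which is the inverse limit of a countable inverse system of commutative unital C*-algebras C(X_n) with surjective unital ⋆-homomorphisms induced by closed embeddings X_{n-1} ↪ X_n of compact Hausdorff spaces. Then A is ⋆-isomorphic to C(X) where X = ⋃_n X_n with the direct limit topology, via f ↦ (f|_{X_n})_n. -/

import Mathlib

/-- The continuous inclusion `K n → K (n+1)` for a monotone family of subsets. -/
def setIncl {X : Type*} [TopologicalSpace X] (K : ℕ → Set X) (hmono : Monotone K)
    (n : ℕ) : C(K n, K (n + 1)) :=
  ⟨fun x => ⟨x.1, hmono (Nat.le_succ n) x.2⟩, by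
    exact Continuous.subtype_mk continuous_subtype_val _⟩

/-- Restriction of a continuous function on `X` to the subspace `K n`. -/
noncomputable def restrictToSet {X : Type*} [TopologicalSpace X] (K : ℕ → Set X) (n : ℕ)
    (f : C(X, ℂ)) : C(K n, ℂ) :=
  f.comp ⟨Subtype.val, continuous_subtype_val⟩

lemma coherent_eq {X : Type*} [TopologicalSpace X] (K : ℕ → Set X) (hmono : Monotone K)
    (F : ∀ n, C(K n, ℂ))
    (hF : ∀ n, (F (n + 1)).comp (setIncl K hmono n) = F n)
    {m n : ℕ} (h : m ≤ n) (x : X) (hxm : x ∈ K m) :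
    F n ⟨x, hmono h hxm⟩ = F m ⟨x, hxm⟩ := by
  induction n with
  | zero =>
    cases Nat.le_zero.mp h
    rfl
  | succ n ih =>
    rcases Nat.lt_or_ge m (n + 1) with h' | h'
    · have hn : m ≤ n := Nat.lt_succ_iff.mp h'
      have h1 := congrFun (congrArg DFunLike.coe (hF n)) ⟨x, hmono hn hxm⟩
      simp only [ContinuousMap.comp_apply] at h1
      rw [← ih hn]
      exact h1
    · have : m = n + 1 := le_antisymm h h'
      subst this
      rfl

/-- Let `X = ⋃ n, K n` be a countable increasing union of compact
Hausdorff (closed) subspaces, with the direct limit topology.  Then the commutative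
unital ⋆-algebra `lim← C(K n, ℂ)` (inverse limit of the system of surjective
restriction ⋆-homomorphisms induced by the closed embeddings `K n ↪ K (n+1)`) is
⋆-isomorphic to `C(X, ℂ)` via `f ↦ (f|_{K n})ₙ`: this map is an injective ⋆-algebra
homomorphism whose range is exactly the set of coherent sequences. -/
theorem starAlgebra_iso_inverseLimit (X : Type*) [TopologicalSpace X] [T2Space X]
    (K : ℕ → Set X) (hmono : Monotone K)
    (hcompact : ∀ n, IsCompact (K n))
    (hclosed : ∀ n, IsClosed (K n))
    (hunion : ∀ x : X, ∃ n, x ∈ K n)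
    (hdirlim : ∀ U : Set X, IsOpen U ↔ ∀ n, IsOpen (Subtype.val ⁻¹' U : Set (K n))) :
    (Function.Injective (fun f : C(X, ℂ) => fun n => restrictToSet K n f)) ∧
    (Set.range (fun f : C(X, ℂ) => fun n => restrictToSet K n f) =
      {F : ∀ n, C(K n, ℂ) | ∀ n, (F (n + 1)).comp (setIncl K hmono n) = F n}) ∧
    (∀ f g : C(X, ℂ), ∀ n, restrictToSet K n (f * g) = restrictToSet K n f * restrictToSet K n g) ∧
    (∀ f g : C(X, ℂ), ∀ n, restrictToSet K n (f + g) = restrictToSet K n f + restrictToSet K n g) ∧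
    (∀ n, restrictToSet K n (1 : C(X, ℂ)) = 1) ∧
    (∀ (c : ℂ) (f : C(X, ℂ)) (n : ℕ), restrictToSet K n (c • f) = c • restrictToSet K n f) ∧
    (∀ f : C(X, ℂ), ∀ n, restrictToSet K n (star f) = star (restrictToSet K n f)) := by
  refine ⟨?_, ?_, ?_, ?_, ?_, ?_, ?_⟩
  · -- injectivity
    intro f g h
    ext x
    obtain ⟨n, hx⟩ := hunion x
    have := congrFun (congrArg DFunLike.coe (congrFun h n)) ⟨x, hx⟩
    exact this
  · -- range
    ext F
    constructor
    · rintro ⟨f, rfl⟩ n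
      rfl
    · intro hF
      -- glue the coherent family into a function on X
      classical
      set g : X → ℂ := fun x => F (Classical.choose (hunion x))
        ⟨x, Classical.choose_spec (hunion x)⟩ with hg
      have key : ∀ (n : ℕ) (x : X) (hx : x ∈ K n), g x = F n ⟨x, hx⟩ := by
        intro n x hx
        set m := Classical.choose (hunion x) with hm
        have hxm : x ∈ K m := Classical.choose_spec (hunion x)
        rcases le_total m n with h | h
        · exact (coherent_eq K hmono F hF h x hxm).symm
        · exact coherent_eq K hmono F hF h x hx
      have hgc : Continuous g := by
        rw [continuous_def]
        intro U hU
        rw [hdirlim]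
        intro n
        have : (Subtype.val ⁻¹' (g ⁻¹' U) : Set (K n)) = (F n) ⁻¹' U := by
          ext y
          simp only [Set.mem_preimage]
          rw [key n y.1 y.2]
        rw [this]
        exact (F n).continuous.isOpen_preimage U hU
      refine ⟨⟨g, hgc⟩, ?_⟩
      funext n
      ext y
      exact key n y.1 y.2
  · intro f g n; rfl
  · intro f g n; rfl
  · intro n; rfl
  · intro c f n; rfl
  · intro f n; rfl
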